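/- For every nonnegative integer i ≥ 1 and integers r ≥ 0, p ≥ 1, the hyperharmonic numbers satisfy Σ_{k=1}^{i} C(i-k+p-1, p-1) H_k^r = H_i^{p+r}. -/
import Mathlib


open Finset

/-- The hyperharmonic numbers `H_m^r`: `H_m^0 = 1/m` for `m ≥ 1` (and `0` for `m = 0`),
and `H_m^r = ∑_{k=1}^m H_k^{r-1}` for `r ≥ 1`. -/
def hyperharmonic : ℕ → ℕ → ℚ
  | 0, m => 1 / m
  | r + 1, m => ∑ k ∈ Finset.Icc 1 m, hyperharmonic r k

lemma hockey (i k p : ℕ) (hk : 1 ≤ k) (hki : k ≤ i) (hp : 1 ≤ p) :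
    (i - k + p).choose p = ∑ j ∈ Icc k i, (j - k + p - 1).choose (p - 1) := by
  have h1 : (i - k + p) = (i - k + p - 1) + 1 := by omega
  have h2 : p = (p - 1) + 1 := by omega
  rw [h1]
  conv_lhs => rw [h2]
  rw [← Nat.sum_Icc_choose]
  refine (Finset.sum_nbij' (fun j => j - k + (p - 1)) (fun c => c - (p - 1) + k)
    ?_ ?_ ?_ ?_ ?_).symm
  · intro j hj; simp only [mem_Icc] at *; omega
  · intro c hc; simp only [mem_Icc] at *; omega
  · intro j hj; simp only [mem_Icc] at *; omega
  · intro c hc; simp only [mem_Icc] at *; omega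
  · intro j hj; simp only [mem_Icc] at hj
    have h : j - k + (p - 1) = j - k + p - 1 := by omega
    simp only [h]

theorem hyperharmonic_binomial_sum (i r p : ℕ) (hi : 1 ≤ i) (hp : 1 ≤ p) :
    ∑ k ∈ Finset.Icc 1 i, ((i - k + p - 1).choose (p - 1) : ℚ) * hyperharmonic r k
      = hyperharmonic (p + r) i := by
  induction p, hp using Nat.le_induction generalizing i with
  | base =>
    rw [Nat.add_comm]
    simp [hyperharmonic]
  | succ p hp ih =>
    have step : ∑ k ∈ Finset.Icc 1 i, ((i - k + (p + 1) - 1).choose (p + 1 - 1) : ℚ)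
          * hyperharmonic r k
        = ∑ k ∈ Icc 1 i, ∑ j ∈ Icc k i,
            ((j - k + p - 1).choose (p - 1) : ℚ) * hyperharmonic r k := by
      refine Finset.sum_congr rfl fun k hk => ?_
      simp only [mem_Icc] at hk
      rw [← Finset.sum_mul]
      congr 1
      have : (i - k + (p + 1) - 1) = i - k + p := by omega
      rw [this, show p + 1 - 1 = p from rfl,
        hockey i k p hk.1 hk.2 hp]
      push_cast
      ring
    rw [step]
    have swap : ∑ k ∈ Icc 1 i, ∑ j ∈ Icc k i,
          ((j - k + p - 1).choose (p - 1) : ℚ) * hyperharmonic r k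
        = ∑ j ∈ Icc 1 i, ∑ k ∈ Icc 1 j,
          ((j - k + p - 1).choose (p - 1) : ℚ) * hyperharmonic r k := by
      rw [Finset.sum_sigma', Finset.sum_sigma']
      refine Finset.sum_nbij' (fun x => ⟨x.2, x.1⟩) (fun x => ⟨x.2, x.1⟩) ?_ ?_ ?_ ?_ ?_ <;>
        intro x hx <;>
        simp only [Finset.mem_sigma, mem_Icc] at * <;>
        first | omega | rfl
    rw [swap]
    have : ∀ j ∈ Icc 1 i, ∑ k ∈ Icc 1 j,
        ((j - k + p - 1).choose (p - 1) : ℚ) * hyperharmonic r k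
        = hyperharmonic (p + r) j := by
      intro j hj
      simp only [mem_Icc] at hj
      exact ih j hj.1
    rw [Finset.sum_congr rfl this]
    show _ = hyperharmonic (p + 1 + r) i
    rw [show p + 1 + r = (p + r) + 1 by omega]
    rfl
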